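/- Let n ≥ 1 and d ≥ 1 be integers, let x_1, …, x_n ∈ ℝ^d, and suppose the gradient-enhanced Gaussian kernel matrix K̃∇ built from x_1,…,x_n is positive semidefinite. Let κ_max > 1 and set η := (1 + u_G(n,d))/(κ_max − 1). Then (λ_max + η)/(λ_min + η) ≤ κ_max, where λ_max and λ_min are the largest and smallest eigenvalues of K̃∇; that is, the condition number of K̃∇ + ηI is at most κ_max. -/

import Mathlib

open scoped BigOperators

/-- The gradient-enhanced Gaussian kernel matrix (with unit hyperparameters) built
from points `x_1, …, x_n ∈ ℝ^d`, indexed by pairs `(p, a)` where `p = none` is the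
function-value block and `p = some j` the block of derivatives in coordinate `j`. -/
noncomputable def Kgrad {n d : ℕ} (x : Fin n → Fin d → ℝ) :
    Matrix (Option (Fin d) × Fin n) (Option (Fin d) × Fin n) ℝ :=
  fun pa qi =>
    let a := pa.2
    let i := qi.2
    let k : ℝ := Real.exp (-(∑ l, (x a l - x i l) ^ 2) / 2)
    match pa.1, qi.1 with
    | none, none => k
    | none, some j => (x a j - x i j) * k
    | some p, none => -(x a p - x i p) * k
    | some p, some j =>
        ((if p = j then (1 : ℝ) else 0) - (x a p - x i p) * (x a j - x i j)) * k

/-- Upper bound `u_G(n,d)`. -/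
noncomputable def uG (n d : ℕ) : ℝ :=
  ((n : ℝ) - 1) * ((1 + Real.sqrt (1 + 4 * (d : ℝ))) / 2) *
    Real.exp (-(1 + 2 * (d : ℝ) - Real.sqrt (1 + 4 * (d : ℝ))) / (4 * (d : ℝ)))

open Finset Matrix


lemma helper_sqrt {x P Q : ℝ} (hP : 0 ≤ P) (h : x ^ 2 ≤ P * Q) :
    x ≤ Real.sqrt P * Real.sqrt Q := by
  calc x ≤ |x| := le_abs_self x
    _ = Real.sqrt (x ^ 2) := (Real.sqrt_sq_eq_abs x).symm
    _ ≤ Real.sqrt (P * Q) := Real.sqrt_le_sqrt h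
    _ = Real.sqrt P * Real.sqrt Q := Real.sqrt_mul hP Q

lemma exp_poly_bound {t : ℝ} (ht : 0 ≤ t) :
    1 + t + t ^ 2 / 2 + t ^ 3 / 6 + t ^ 4 / 24 ≤ Real.exp t := by
  have h := Real.sum_le_exp_of_nonneg ht 5
  simp [Finset.sum_range_succ, Nat.factorial] at h
  exact h

lemma exp_q1_nonneg {t : ℝ} (ht : 0 ≤ t) : 0 ≤ Real.exp t - 1 - t := by
  have := exp_poly_bound ht
  nlinarith [pow_nonneg ht 2, pow_nonneg ht 3, pow_nonneg ht 4]

lemma exp_q2_nonneg {t : ℝ} (ht : 0 ≤ t) : 0 ≤ Real.exp t - t - (1 - t) ^ 2 := by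
  have := exp_poly_bound ht
  nlinarith [mul_nonneg ht (sq_nonneg (t - 3/2)), pow_nonneg ht 3, pow_nonneg ht 4]

lemma exp_prod_bound {t : ℝ} (ht : 0 ≤ t) :
    t ^ 3 ≤ (Real.exp t - 1 - t) * (Real.exp t - t - (1 - t) ^ 2) := by
  have hE4 := exp_poly_bound ht
  have hq1 : t ^ 2 / 2 + t ^ 3 / 6 + t ^ 4 / 24 ≤ Real.exp t - 1 - t := by linarith
  have hq2 : 2 * t - t ^ 2 / 2 + t ^ 3 / 6 + t ^ 4 / 24
      ≤ Real.exp t - t - (1 - t) ^ 2 := by nlinarith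
  have hP2 : (0:ℝ) ≤ 2 * t - t ^ 2 / 2 + t ^ 3 / 6 + t ^ 4 / 24 := by
    nlinarith [mul_nonneg ht (sq_nonneg (t - 3/2))]
  have h1 : t ^ 3 ≤ (t ^ 2 / 2 + t ^ 3 / 6 + t ^ 4 / 24) *
      (2 * t - t ^ 2 / 2 + t ^ 3 / 6 + t ^ 4 / 24) := by
    have hpoly : (t ^ 2 / 2 + t ^ 3 / 6 + t ^ 4 / 24) *
          (2 * t - t ^ 2 / 2 + t ^ 3 / 6 + t ^ 4 / 24) - t ^ 3
        = t ^ 4 / 12 + t ^ 5 / 12 + t ^ 6 / 36 + t ^ 7 / 72 + t ^ 8 / 576 := by ring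
    nlinarith [hpoly, pow_nonneg ht 4, pow_nonneg ht 5, pow_nonneg ht 6,
      pow_nonneg ht 7, pow_nonneg ht 8]
  exact h1.trans (mul_le_mul hq1 hq2 hP2 (le_trans (by positivity) hq1))

lemma core_key (r v₀ a : ℝ) :
    0 ≤ (Real.exp (r ^ 2) - 1 - r ^ 2) * v₀ ^ 2 + 2 * (r ^ 2 * r) * v₀ * a
      + (Real.exp (r ^ 2) - r ^ 2 - (1 - r ^ 2) ^ 2) * a ^ 2 := by
  have ht : (0:ℝ) ≤ r ^ 2 := sq_nonneg r
  have hq1 := exp_q1_nonneg ht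
  have hq2 := exp_q2_nonneg ht
  have hprod := exp_prod_bound ht
  rcases eq_or_ne r 0 with hr0 | hr0
  · rw [hr0]
    norm_num [Real.exp_zero]
  · have hq1pos : 0 < Real.exp (r ^ 2) - 1 - r ^ 2 := by
      have ht' : 0 < r ^ 2 := by positivity
      nlinarith [exp_poly_bound ht]
    have h2 : (r ^ 2 * r) ^ 2 = (r ^ 2) ^ 3 := by ring
    nlinarith [sq_nonneg ((Real.exp (r ^ 2) - 1 - r ^ 2) * v₀ + r ^ 2 * r * a),
      mul_nonneg (sub_nonneg.mpr hprod) (sq_nonneg a)]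

lemma core_sq (r v₀ a u₀ b : ℝ) :
    (v₀ * u₀ + r * v₀ * b - r * a * u₀ + (1 - r ^ 2) * a * b) ^ 2
      ≤ Real.exp (r ^ 2) * ((v₀ ^ 2 + a ^ 2) * (u₀ ^ 2 + b ^ 2)) := by
  have hexpr : v₀ * u₀ + r * v₀ * b - r * a * u₀ + (1 - r ^ 2) * a * b
      = (v₀ - r * a) * u₀ + (r * v₀ + (1 - r ^ 2) * a) * b := by ring
  have hCS : ((v₀ - r * a) * u₀ + (r * v₀ + (1 - r ^ 2) * a) * b) ^ 2
      ≤ ((v₀ - r * a) ^ 2 + (r * v₀ + (1 - r ^ 2) * a) ^ 2) * (u₀ ^ 2 + b ^ 2) := by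
    nlinarith [sq_nonneg ((v₀ - r * a) * b - (r * v₀ + (1 - r ^ 2) * a) * u₀)]
  have hQ : (v₀ - r * a) ^ 2 + (r * v₀ + (1 - r ^ 2) * a) ^ 2
      ≤ Real.exp (r ^ 2) * (v₀ ^ 2 + a ^ 2) := by
    have key := core_key r v₀ a
    nlinarith [key]
  rw [hexpr]
  calc ((v₀ - r * a) * u₀ + (r * v₀ + (1 - r ^ 2) * a) * b) ^ 2
      ≤ ((v₀ - r * a) ^ 2 + (r * v₀ + (1 - r ^ 2) * a) ^ 2) * (u₀ ^ 2 + b ^ 2) := hCS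
    _ ≤ Real.exp (r ^ 2) * (v₀ ^ 2 + a ^ 2) * (u₀ ^ 2 + b ^ 2) :=
        mul_le_mul_of_nonneg_right hQ (by positivity)
    _ = Real.exp (r ^ 2) * ((v₀ ^ 2 + a ^ 2) * (u₀ ^ 2 + b ^ 2)) := by ring

lemma cs_sqrt_pair {P Q c e : ℝ} (hP : 0 ≤ P) (hQ : 0 ≤ Q) (hc : 0 ≤ c) (he : 0 ≤ e) :
    Real.sqrt P * Real.sqrt Q + c * e ≤ Real.sqrt (P + c ^ 2) * Real.sqrt (Q + e ^ 2) := by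
  apply helper_sqrt (by positivity)
  nlinarith [sq_nonneg (Real.sqrt P * e - Real.sqrt Q * c), Real.sq_sqrt hP, Real.sq_sqrt hQ,
    mul_nonneg hc he, Real.sqrt_nonneg P, Real.sqrt_nonneg Q,
    mul_nonneg (Real.sqrt_nonneg P) (Real.sqrt_nonneg Q)]

/-- The inner (unnormalized) block bound. -/

lemma block_core {d : ℕ} (Δ v' u' : Fin d → ℝ) (v₀ u₀ : ℝ) :
    v₀ * u₀ + v₀ * (∑ j, Δ j * u' j) - (∑ j, Δ j * v' j) * u₀
        + (∑ j, v' j * u' j) - (∑ j, Δ j * v' j) * (∑ j, Δ j * u' j)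
      ≤ Real.exp ((∑ l, Δ l ^ 2) / 2) *
        (Real.sqrt (v₀ ^ 2 + ∑ j, v' j ^ 2) * Real.sqrt (u₀ ^ 2 + ∑ j, u' j ^ 2)) := by
  set t : ℝ := ∑ l, Δ l ^ 2 with htdef
  have ht : 0 ≤ t := Finset.sum_nonneg fun _ _ => sq_nonneg _
  set α : ℝ := ∑ j, Δ j * v' j with hα
  set β : ℝ := ∑ j, Δ j * u' j with hβ
  have hVnn : (0:ℝ) ≤ ∑ j, v' j ^ 2 := Finset.sum_nonneg fun _ _ => sq_nonneg _
  have hUnn : (0:ℝ) ≤ ∑ j, u' j ^ 2 := Finset.sum_nonneg fun _ _ => sq_nonneg _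
  have hexp1 : (1:ℝ) ≤ Real.exp (t / 2) := Real.one_le_exp (by linarith)
  rcases eq_or_lt_of_le ht with h0 | h0
  · -- t = 0: all Δ l = 0
    have hΔ : ∀ l ∈ Finset.univ, Δ l ^ 2 = 0 := by
      intro l hl
      have := (Finset.sum_eq_zero_iff_of_nonneg (fun i _ => sq_nonneg (Δ i))).mp h0.symm
      exact this l hl
    have hΔ' : ∀ l, Δ l = 0 := fun l => by
      have := hΔ l (Finset.mem_univ l); exact pow_eq_zero_iff two_ne_zero |>.mp this
    have hα0 : α = 0 := by rw [hα]; exact Finset.sum_eq_zero fun j _ => by rw [hΔ' j]; ring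
    have hβ0 : β = 0 := by rw [hβ]; exact Finset.sum_eq_zero fun j _ => by rw [hΔ' j]; ring
    rw [hα0, hβ0]
    have h1 : (∑ j, v' j * u' j) ≤ Real.sqrt (∑ j, v' j ^ 2) * Real.sqrt (∑ j, u' j ^ 2) :=
      Real.sum_mul_le_sqrt_mul_sqrt _ _ _
    have h2 : v₀ * u₀ + Real.sqrt (∑ j, v' j ^ 2) * Real.sqrt (∑ j, u' j ^ 2)
        ≤ Real.sqrt (v₀ ^ 2 + ∑ j, v' j ^ 2) * Real.sqrt (u₀ ^ 2 + ∑ j, u' j ^ 2) := by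
      have := cs_sqrt_pair (sq_nonneg v₀) (sq_nonneg u₀)
        (Real.sqrt_nonneg (∑ j, v' j ^ 2)) (Real.sqrt_nonneg (∑ j, u' j ^ 2))
      rw [Real.sq_sqrt hVnn, Real.sq_sqrt hUnn, Real.sqrt_sq_eq_abs, Real.sqrt_sq_eq_abs] at this
      calc v₀ * u₀ + Real.sqrt (∑ j, v' j ^ 2) * Real.sqrt (∑ j, u' j ^ 2)
          ≤ |v₀| * |u₀| + Real.sqrt (∑ j, v' j ^ 2) * Real.sqrt (∑ j, u' j ^ 2) := by
            have : v₀ * u₀ ≤ |v₀| * |u₀| := by rw [← abs_mul]; exact le_abs_self _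
            linarith
        _ ≤ _ := this
    have hW : 0 ≤ Real.sqrt (v₀ ^ 2 + ∑ j, v' j ^ 2) * Real.sqrt (u₀ ^ 2 + ∑ j, u' j ^ 2) :=
      mul_nonneg (Real.sqrt_nonneg _) (Real.sqrt_nonneg _)
    calc v₀ * u₀ + v₀ * 0 - 0 * u₀ + (∑ j, v' j * u' j) - 0 * 0
        = v₀ * u₀ + (∑ j, v' j * u' j) := by ring
      _ ≤ Real.sqrt (v₀ ^ 2 + ∑ j, v' j ^ 2) * Real.sqrt (u₀ ^ 2 + ∑ j, u' j ^ 2) := by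
          linarith
      _ ≤ Real.exp (t / 2) * (Real.sqrt (v₀ ^ 2 + ∑ j, v' j ^ 2)
            * Real.sqrt (u₀ ^ 2 + ∑ j, u' j ^ 2)) := le_mul_of_one_le_left hW hexp1
  · -- t > 0
    set r : ℝ := Real.sqrt t with hrdef
    have hr : 0 < r := Real.sqrt_pos.mpr h0
    have hr2 : r ^ 2 = t := Real.sq_sqrt ht
    set a : ℝ := α / r with hadef
    set b : ℝ := β / r with hbdef
    -- Cauchy–Schwarz: α² ≤ t * Σ v'²
    have hαCS : α ^ 2 ≤ t * ∑ j, v' j ^ 2 := by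
      rw [hα, htdef]; exact Finset.sum_mul_sq_le_sq_mul_sq _ _ _
    have hβCS : β ^ 2 ≤ t * ∑ j, u' j ^ 2 := by
      rw [hβ, htdef]; exact Finset.sum_mul_sq_le_sq_mul_sq _ _ _
    have ha2 : a ^ 2 ≤ ∑ j, v' j ^ 2 := by
      rw [hadef, div_pow, hr2, div_le_iff₀ h0]; linarith [hαCS]
    have hb2 : b ^ 2 ≤ ∑ j, u' j ^ 2 := by
      rw [hbdef, div_pow, hr2, div_le_iff₀ h0]; linarith [hβCS]
    set c : ℝ := Real.sqrt ((∑ j, v' j ^ 2) - a ^ 2) with hcdef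
    set e : ℝ := Real.sqrt ((∑ j, u' j ^ 2) - b ^ 2) with hedef
    have hc2 : c ^ 2 = (∑ j, v' j ^ 2) - a ^ 2 := Real.sq_sqrt (by linarith)
    have he2 : e ^ 2 = (∑ j, u' j ^ 2) - b ^ 2 := Real.sq_sqrt (by linarith)
    -- residual Cauchy–Schwarz
    have hres : (∑ j, v' j * u' j) - a * b ≤ c * e := by
      have hsum1 : ∑ j, (v' j - (α / t) * Δ j) * (u' j - (β / t) * Δ j)
          = (∑ j, v' j * u' j) - α * β / t := by
        have expand : ∀ j, (v' j - (α / t) * Δ j) * (u' j - (β / t) * Δ j)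
            = v' j * u' j - (α / t) * (Δ j * u' j) - (β / t) * (Δ j * v' j)
              + (α / t) * (β / t) * Δ j ^ 2 := fun j => by ring
        rw [Finset.sum_congr rfl fun j _ => expand j]
        rw [Finset.sum_add_distrib, Finset.sum_sub_distrib, Finset.sum_sub_distrib,
          ← Finset.mul_sum, ← Finset.mul_sum, ← Finset.mul_sum, ← hβ, ← hα, ← htdef]
        field_simp
        ring
      have hsumv : ∑ j, (v' j - (α / t) * Δ j) ^ 2 = (∑ j, v' j ^ 2) - α ^ 2 / t := by
        have expand : ∀ j, (v' j - (α / t) * Δ j) ^ 2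
            = v' j ^ 2 - 2 * (α / t) * (Δ j * v' j) + (α / t) ^ 2 * Δ j ^ 2 := fun j => by ring
        rw [Finset.sum_congr rfl fun j _ => expand j]
        rw [Finset.sum_add_distrib, Finset.sum_sub_distrib,
          ← Finset.mul_sum, ← Finset.mul_sum, ← hα, ← htdef]
        field_simp
        ring
      have hsumu : ∑ j, (u' j - (β / t) * Δ j) ^ 2 = (∑ j, u' j ^ 2) - β ^ 2 / t := by
        have expand : ∀ j, (u' j - (β / t) * Δ j) ^ 2
            = u' j ^ 2 - 2 * (β / t) * (Δ j * u' j) + (β / t) ^ 2 * Δ j ^ 2 := fun j => by ring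
        rw [Finset.sum_congr rfl fun j _ => expand j]
        rw [Finset.sum_add_distrib, Finset.sum_sub_distrib,
          ← Finset.mul_sum, ← Finset.mul_sum, ← hβ, ← htdef]
        field_simp
        ring
      have hab : a * b = α * β / t := by
        rw [hadef, hbdef, div_mul_div_comm, ← hr2, pow_two]
      have ha2' : a ^ 2 = α ^ 2 / t := by rw [hadef, div_pow, hr2]
      have hb2' : b ^ 2 = β ^ 2 / t := by rw [hbdef, div_pow, hr2]
      have := Real.sum_mul_le_sqrt_mul_sqrt Finset.univ
        (fun j => v' j - (α / t) * Δ j) (fun j => u' j - (β / t) * Δ j)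
      rw [hsum1, hsumv, hsumu] at this
      rw [hab]
      calc (∑ j, v' j * u' j) - α * β / t ≤ _ := this
        _ = c * e := by rw [hcdef, hedef, ha2', hb2']
    -- core bound
    have hG : v₀ * u₀ + r * v₀ * b - r * a * u₀ + (1 - r ^ 2) * a * b
        ≤ Real.exp (t / 2) * (Real.sqrt (v₀ ^ 2 + a ^ 2) * Real.sqrt (u₀ ^ 2 + b ^ 2)) := by
      have h1 := core_sq r v₀ a u₀ b
      have h2 : (v₀ * u₀ + r * v₀ * b - r * a * u₀ + (1 - r ^ 2) * a * b) ^ 2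
          ≤ (Real.exp (r ^ 2) * (v₀ ^ 2 + a ^ 2)) * (u₀ ^ 2 + b ^ 2) :=
        le_of_le_of_eq h1 (by ring)
      have h3 := helper_sqrt (by positivity) h2
      calc v₀ * u₀ + r * v₀ * b - r * a * u₀ + (1 - r ^ 2) * a * b
          ≤ Real.sqrt (Real.exp (r ^ 2) * (v₀ ^ 2 + a ^ 2)) * Real.sqrt (u₀ ^ 2 + b ^ 2) := h3
        _ = Real.exp (t / 2) * (Real.sqrt (v₀ ^ 2 + a ^ 2) * Real.sqrt (u₀ ^ 2 + b ^ 2)) := by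
            rw [Real.sqrt_mul (Real.exp_nonneg _), hr2, ← Real.exp_half, mul_assoc]
    -- put together
    have hkey : v₀ * u₀ + v₀ * β - α * u₀ + (∑ j, v' j * u' j) - α * β
        = (v₀ * u₀ + r * v₀ * b - r * a * u₀ + (1 - r ^ 2) * a * b)
          + ((∑ j, v' j * u' j) - a * b) := by
      have hra : r * a = α := by rw [hadef]; field_simp
      have hrb : r * b = β := by rw [hbdef]; field_simp
      have hr2ab : r ^ 2 * (a * b) = α * β := by
        calc r ^ 2 * (a * b) = (r * a) * (r * b) := by ring
          _ = α * β := by rw [hra, hrb]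
      linear_combination (-v₀) * hrb + u₀ * hra + hr2ab
    have hcnn : 0 ≤ c := Real.sqrt_nonneg _
    have henn : 0 ≤ e := Real.sqrt_nonneg _
    have hstep : (∑ j, v' j * u' j) - a * b ≤ Real.exp (t / 2) * (c * e) :=
      hres.trans (le_mul_of_one_le_left (mul_nonneg hcnn henn) hexp1)
    have hfinal : Real.sqrt (v₀ ^ 2 + a ^ 2) * Real.sqrt (u₀ ^ 2 + b ^ 2) + c * e
        ≤ Real.sqrt (v₀ ^ 2 + ∑ j, v' j ^ 2) * Real.sqrt (u₀ ^ 2 + ∑ j, u' j ^ 2) := by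
      have := cs_sqrt_pair (P := v₀ ^ 2 + a ^ 2) (Q := u₀ ^ 2 + b ^ 2)
        (by positivity) (by positivity) hcnn henn
      rw [hc2, he2] at this
      calc Real.sqrt (v₀ ^ 2 + a ^ 2) * Real.sqrt (u₀ ^ 2 + b ^ 2) + c * e
          ≤ Real.sqrt (v₀ ^ 2 + a ^ 2 + ((∑ j, v' j ^ 2) - a ^ 2))
            * Real.sqrt (u₀ ^ 2 + b ^ 2 + ((∑ j, u' j ^ 2) - b ^ 2)) := this
        _ = _ := by norm_num
    calc v₀ * u₀ + v₀ * β - α * u₀ + (∑ j, v' j * u' j) - α * β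
        = (v₀ * u₀ + r * v₀ * b - r * a * u₀ + (1 - r ^ 2) * a * b)
          + ((∑ j, v' j * u' j) - a * b) := hkey
      _ ≤ Real.exp (t / 2) * (Real.sqrt (v₀ ^ 2 + a ^ 2) * Real.sqrt (u₀ ^ 2 + b ^ 2))
          + Real.exp (t / 2) * (c * e) := add_le_add hG hstep
      _ = Real.exp (t / 2) * (Real.sqrt (v₀ ^ 2 + a ^ 2) * Real.sqrt (u₀ ^ 2 + b ^ 2) + c * e) := by
          ring
      _ ≤ Real.exp (t / 2) * (Real.sqrt (v₀ ^ 2 + ∑ j, v' j ^ 2)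
            * Real.sqrt (u₀ ^ 2 + ∑ j, u' j ^ 2)) := by
          exact mul_le_mul_of_nonneg_left hfinal (Real.exp_nonneg _)

lemma sum_prod_rearrange {γ : Type*} [Fintype γ] {m : ℕ} (g : (γ × Fin m) → (γ × Fin m) → ℝ) :
    ∑ pa : γ × Fin m, ∑ qi : γ × Fin m, g pa qi
      = ∑ a : Fin m, ∑ i : Fin m, ∑ p : γ, ∑ q : γ, g (p, a) (q, i) := by
  rw [Fintype.sum_prod_type, Finset.sum_comm]
  refine Finset.sum_congr rfl fun a _ => ?_
  rw [Finset.sum_comm]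
  rw [Fintype.sum_prod_type, Finset.sum_comm]
  exact Finset.sum_congr rfl fun i _ => Finset.sum_comm

lemma inner_expand {d : ℕ} (k v₀ u₀ : ℝ) (Δ V U : Fin d → ℝ) :
    (v₀ * (k * u₀) + ∑ q, v₀ * ((Δ q * k) * U q))
      + ∑ p, (V p * ((-Δ p * k) * u₀)
          + ∑ q, V p * ((((if p = q then (1:ℝ) else 0) - Δ p * Δ q) * k) * U q))
    = k * (v₀ * u₀ + v₀ * (∑ j, Δ j * U j) - (∑ j, Δ j * V j) * u₀
        + (∑ j, V j * U j) - (∑ j, Δ j * V j) * (∑ j, Δ j * U j)) := by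
  rw [Finset.sum_mul_sum]
  simp only [sub_mul, mul_sub, ite_mul, one_mul, zero_mul, mul_ite, mul_zero,
    Finset.sum_sub_distrib, Finset.sum_ite_eq, Finset.mem_univ, if_true,
    Finset.mul_sum, Finset.sum_add_distrib]
  ring_nf
  simp only [Finset.mul_sum]
  ring_nf
  rw [show (∑ x, -(k * u₀ * V x * Δ x)) = -∑ x, k * u₀ * Δ x * V x by
    rw [← Finset.sum_neg_distrib]; exact Finset.sum_congr rfl fun x _ => by ring]
  rw [show (∑ x, k * V x * U x) = ∑ x, k * V x * U x from
    Finset.sum_congr rfl fun x _ => by ring]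
  rw [show (∑ x : Fin d, ∑ x1 : Fin d, k * V x * Δ x * Δ x1 * U x1)
      = ∑ x : Fin d, ∑ x1 : Fin d, k * Δ x * V x * Δ x1 * U x1 from
    Finset.sum_congr rfl fun x _ => Finset.sum_congr rfl fun y _ => by ring]
  ring

set_option maxHeartbeats 1000000 in
lemma quad_le {n d : ℕ} (x : Fin n → Fin d → ℝ) (v : Option (Fin d) × Fin n → ℝ) :
    v ⬝ᵥ (Kgrad x) *ᵥ v ≤ (n : ℝ) * (v ⬝ᵥ v) := by
  set w : Fin n → ℝ := fun a => Real.sqrt (v (none, a) ^ 2 + ∑ j, v (some j, a) ^ 2) with hw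
  have hentry : ∀ a i : Fin n,
      (∑ p : Option (Fin d), ∑ q : Option (Fin d),
        v (p, a) * (Kgrad x (p, a) (q, i) * v (q, i))) ≤ w a * w i := by
    intro a i
    have expand := inner_expand (Real.exp (-(∑ l, (x a l - x i l) ^ 2) / 2))
      (v (none, a)) (v (none, i)) (fun l => x a l - x i l)
      (fun j => v (some j, a)) (fun j => v (some j, i))
    have hb := block_core (fun l => x a l - x i l)
      (fun j => v (some j, a)) (fun j => v (some j, i)) (v (none, a)) (v (none, i))
    have hstep : (∑ p : Option (Fin d), ∑ q : Option (Fin d),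
        v (p, a) * (Kgrad x (p, a) (q, i) * v (q, i)))
        = Real.exp (-(∑ l, (x a l - x i l) ^ 2) / 2) *
          (v (none, a) * v (none, i)
            + v (none, a) * (∑ j, (x a j - x i j) * v (some j, i))
            - (∑ j, (x a j - x i j) * v (some j, a)) * v (none, i)
            + (∑ j, v (some j, a) * v (some j, i))
            - (∑ j, (x a j - x i j) * v (some j, a))
              * (∑ j, (x a j - x i j) * v (some j, i))) := by
      rw [← expand]
      simp only [Fintype.sum_option]
      rfl
    rw [hstep]
    have hknn : (0:ℝ) ≤ Real.exp (-(∑ l, (x a l - x i l) ^ 2) / 2) := Real.exp_nonneg _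
    calc Real.exp (-(∑ l, (x a l - x i l) ^ 2) / 2) * _
        ≤ Real.exp (-(∑ l, (x a l - x i l) ^ 2) / 2) *
          (Real.exp ((∑ l, (x a l - x i l) ^ 2) / 2) *
            (Real.sqrt (v (none, a) ^ 2 + ∑ j, v (some j, a) ^ 2)
              * Real.sqrt (v (none, i) ^ 2 + ∑ j, v (some j, i) ^ 2))) :=
          mul_le_mul_of_nonneg_left hb hknn
      _ = w a * w i := by
          rw [← mul_assoc, ← Real.exp_add, hw]
          simp [neg_div]
  have hrw : v ⬝ᵥ (Kgrad x) *ᵥ v = ∑ a : Fin n, ∑ i : Fin n,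
      ∑ p : Option (Fin d), ∑ q : Option (Fin d),
        v (p, a) * (Kgrad x (p, a) (q, i) * v (q, i)) := by
    simp only [dotProduct, Matrix.mulVec, Finset.mul_sum]
    exact sum_prod_rearrange (fun pa qi => v pa * (Kgrad x pa qi * v qi))
  have hwnn : ∀ a, 0 ≤ w a := fun a => Real.sqrt_nonneg _
  calc v ⬝ᵥ (Kgrad x) *ᵥ v = _ := hrw
    _ ≤ ∑ a : Fin n, ∑ i : Fin n, w a * w i :=
        Finset.sum_le_sum fun a _ => Finset.sum_le_sum fun i _ => hentry a i
    _ = (∑ a, w a) ^ 2 := by rw [sq, Finset.sum_mul_sum]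
    _ ≤ (Finset.univ.card : ℝ) * ∑ a, w a ^ 2 := by
        exact_mod_cast sq_sum_le_card_mul_sum_sq (s := Finset.univ) (f := w)
    _ = (n : ℝ) * ∑ a, w a ^ 2 := by rw [Finset.card_univ, Fintype.card_fin]
    _ = (n : ℝ) * (v ⬝ᵥ v) := by
        congr 1
        have hsq : ∀ a : Fin n, w a ^ 2 = v (none, a) ^ 2 + ∑ j, v (some j, a) ^ 2 := by
          intro a
          rw [hw]
          exact Real.sq_sqrt (by positivity)
        rw [Finset.sum_congr rfl fun a _ => hsq a]
        calc ∑ a : Fin n, (v (none, a) ^ 2 + ∑ j, v (some j, a) ^ 2)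
            = ∑ a : Fin n, ∑ p : Option (Fin d), v (p, a) ^ 2 :=
              Finset.sum_congr rfl fun a _ => (Fintype.sum_option (f := fun p : Option (Fin d) => v (p, a) ^ 2)).symm
          _ = ∑ p : Option (Fin d), ∑ a : Fin n, v (p, a) ^ 2 := Finset.sum_comm
          _ = ∑ pa : Option (Fin d) × Fin n, v pa ^ 2 :=
              (Fintype.sum_prod_type (f := fun pa : Option (Fin d) × Fin n => v pa ^ 2)).symm
          _ = v ⬝ᵥ v := by simp [dotProduct, pow_two]

lemma eigen_le {n d : ℕ} (x : Fin n → Fin d → ℝ) (hA : (Kgrad x).IsHermitian)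
    (i : Option (Fin d) × Fin n) : hA.eigenvalues i ≤ (n : ℝ) := by
  set v : (Option (Fin d) × Fin n) → ℝ := ⇑(hA.eigenvectorBasis i) with hv
  have hmv : (Kgrad x) *ᵥ v = hA.eigenvalues i • v := hA.mulVec_eigenvectorBasis i
  have hnorm : ∑ j, v j ^ 2 = 1 := by
    have h1 : ‖hA.eigenvectorBasis i‖ = 1 := hA.eigenvectorBasis.orthonormal.1 i
    have h2 : ‖hA.eigenvectorBasis i‖ ^ 2 = ∑ j, v j ^ 2 := by
      rw [EuclideanSpace.norm_eq]
      rw [Real.sq_sqrt (Finset.sum_nonneg fun j _ => sq_nonneg _)]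
      exact Finset.sum_congr rfl fun j _ => sq_abs _
    rw [← h2, h1, one_pow]
  have hvv : v ⬝ᵥ v = 1 := by
    rw [dotProduct]
    rw [← hnorm]
    exact Finset.sum_congr rfl fun j _ => (pow_two _).symm
  have h1 : v ⬝ᵥ (Kgrad x) *ᵥ v ≤ (n : ℝ) * (v ⬝ᵥ v) := quad_le x v
  rw [hmv] at h1
  have h2 : v ⬝ᵥ (hA.eigenvalues i • v) = hA.eigenvalues i * (v ⬝ᵥ v) := by
    simp [dotProduct, Finset.mul_sum, Pi.smul_apply, smul_eq_mul]
    exact Finset.sum_congr rfl fun j _ => by ring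
  rw [h2, hvv, mul_one, mul_one] at h1
  exact h1

lemma uG_ge {n d : ℕ} (hn : 1 ≤ n) (hd : 1 ≤ d) : (n : ℝ) ≤ 1 + uG n d := by
  have hd1 : (1:ℝ) ≤ (d:ℝ) := by exact_mod_cast hd
  have hn1 : (1:ℝ) ≤ (n:ℝ) := by exact_mod_cast hn
  have hD : (0:ℝ) < 4 * (d:ℝ) := by linarith
  set s : ℝ := Real.sqrt (1 + 4 * (d:ℝ)) with hs
  have hs2 : s ^ 2 = 1 + 4 * (d:ℝ) := Real.sq_sqrt (by linarith)
  have hs0 : 0 ≤ s := Real.sqrt_nonneg _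
  have hs1 : 1 ≤ s := by nlinarith
  have hexp : 1 + (-(1 + 2 * (d:ℝ) - s) / (4 * (d:ℝ)))
      ≤ Real.exp (-(1 + 2 * (d:ℝ) - s) / (4 * (d:ℝ))) := by
    have := Real.add_one_le_exp (-(1 + 2 * (d:ℝ) - s) / (4 * (d:ℝ)))
    linarith
  have hC : (1:ℝ) ≤ ((1 + s) / 2) *
      Real.exp (-(1 + 2 * (d:ℝ) - s) / (4 * (d:ℝ))) := by
    have hstep : ((1 + s) / 2) * (1 + (-(1 + 2 * (d:ℝ) - s) / (4 * (d:ℝ))))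
        ≤ ((1 + s) / 2) * Real.exp (-(1 + 2 * (d:ℝ) - s) / (4 * (d:ℝ))) := by
      apply mul_le_mul_of_nonneg_left hexp (by linarith)
    refine le_trans ?_ hstep
    have h2d : 2 * (d:ℝ) = (s ^ 2 - 1) / 2 := by linarith
    have h4d : 4 * (d:ℝ) = s ^ 2 - 1 := by linarith
    have hsm : s - 1 ≠ 0 ∨ True := Or.inr trivial
    have hs1' : (1:ℝ) < s := by nlinarith
    have hne1 : s - 1 ≠ 0 := by linarith
    have hne2 : s + 1 ≠ 0 := by linarith
    have hne : s ^ 2 - 1 ≠ 0 := by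
      have : s ^ 2 - 1 = (s - 1) * (s + 1) := by ring
      rw [this]; exact mul_ne_zero hne1 hne2
    have key : ((1 + s) / 2) * (1 + (-(1 + 2 * (d:ℝ) - s) / (4 * (d:ℝ)))) = (s + 3) / 4 := by
      rw [h2d, h4d]
      field_simp
      ring
    rw [key]
    linarith
  have huGnn : ((n:ℝ) - 1) * 1 ≤ uG n d := by
    rw [uG, mul_assoc]
    apply mul_le_mul_of_nonneg_left hC (by linarith)
  linarith

/-- If `K̃∇` is positive semidefinite, `κmax > 1` and
`η = (1 + u_G(n,d))/(κmax − 1)`, then `(λmax + η)/(λmin + η) ≤ κmax`, i.e. the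
condition number of `K̃∇ + ηI` is at most `κmax`. -/
theorem stmt_18 {n d : ℕ} (hn : 1 ≤ n) (hd : 1 ≤ d)
    (x : Fin n → Fin d → ℝ) (hpsd : (Kgrad x).PosSemidef)
    (κmax : ℝ) (hκ : 1 < κmax) (η : ℝ) (hη : η = (1 + uG n d) / (κmax - 1)) :
    ((⨆ i, hpsd.1.eigenvalues i) + η) / ((⨅ i, hpsd.1.eigenvalues i) + η) ≤ κmax := by
  haveI : Nonempty (Option (Fin d) × Fin n) := ⟨(none, ⟨0, hn⟩)⟩
  have huG : (n : ℝ) ≤ 1 + uG n d := uG_ge hn hd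
  have hL : (⨆ i, hpsd.1.eigenvalues i) ≤ (n : ℝ) :=
    ciSup_le fun i => eigen_le x hpsd.1 i
  have hm : 0 ≤ ⨅ i, hpsd.1.eigenvalues i :=
    le_ciInf fun i => hpsd.eigenvalues_nonneg i
  have hκ1 : (0:ℝ) < κmax - 1 := by linarith
  have hn1 : (1:ℝ) ≤ (n:ℝ) := by exact_mod_cast hn
  have hηpos : 0 < η := by
    rw [hη]; apply div_pos (by linarith [huG, hn1]) hκ1
  have hκη : (κmax - 1) * η = 1 + uG n d := by
    rw [hη]; field_simp
  rw [div_le_iff₀ (by linarith : 0 < (⨅ i, hpsd.1.eigenvalues i) + η)]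
  nlinarith [hm, hL, huG, hκη, hηpos, hκ1]
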